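/- Let n ≥ 1 and k ≥ 2 be integers. For every i with 0 ≤ i ≤ n−1, the number of paths f in 𝒫_{n,k} with X(f) = i, multiplied by n, equals C(kn, n+1). In particular the statistic X is uniformly distributed over {0, 1, …, n−1} on 𝒫_{n,k}. -/

import Mathlib

/-- The height of the path `f` at point `m`: the partial sum `S(f, m) = Σ_{t < m} f(t)`. -/
def pathSum {N : ℕ} (f : Fin N → ℤ) (m : ℕ) : ℤ :=
  ∑ t ∈ Finset.univ.filter (fun t : Fin N => (t : ℕ) < m), f t

/-- A path in 𝒫_{n,k}: a function `f : Fin (k*n) → ℤ` with all values in {1, −1}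
and exactly `n+1` values equal to 1. -/
def IsPathP (n k : ℕ) (f : Fin (k * n) → ℤ) : Prop :=
  (∀ t, f t = 1 ∨ f t = -1) ∧
    (Finset.univ.filter (fun t : Fin (k * n) => f t = 1)).card = n + 1

/-- The statistic `X`: the number of interior k-divisible points of `f` lying strictly
above the baseline, i.e. the number of `m` with `0 < m < k*n`, `k ∣ m`, and
`k*n·S(f, m) > m·(2 − (k−2)·n)`. -/
def statX (n k : ℕ) (f : Fin (k * n) → ℤ) : ℕ :=
  ((Finset.range (k * n)).filter (fun m => 0 < m ∧ k ∣ m ∧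
    ((k * n : ℕ) : ℤ) * pathSum f m > (m : ℤ) * (2 - ((k : ℤ) - 2) * (n : ℤ)))).card

namespace Stmt3

def F {N : ℕ} (f : Fin N → ℤ) (t : ℕ) : ℤ :=
  if h : N = 0 then 0 else f ⟨t % N, Nat.mod_lt _ (Nat.pos_of_ne_zero h)⟩

def SF {N : ℕ} (f : Fin N → ℤ) (m : ℕ) : ℤ := ∑ t ∈ Finset.range m, F f t

def rot {N : ℕ} (s : ℕ) (f : Fin N → ℤ) : Fin N → ℤ := fun t => F f (t.val + s)

variable {N : ℕ} {f : Fin N → ℤ}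

lemma F_apply_fin (f : Fin N → ℤ) (t : Fin N) : F f t.val = f t := by
  have hN : N ≠ 0 := t.pos.ne'
  simp [F, hN, Nat.mod_eq_of_lt t.isLt]

lemma F_add (f : Fin N → ℤ) (t : ℕ) : F f (t + N) = F f t := by
  unfold F; split
  · rfl
  · simp [Nat.add_mod_right]

lemma F_add_mul (f : Fin N → ℤ) (t q : ℕ) : F f (t + q * N) = F f t := by
  induction q with
  | zero => simp
  | succ q ih => rw [Nat.succ_mul, ← Nat.add_assoc, F_add, ih]

lemma F_mod (f : Fin N → ℤ) (t : ℕ) : F f (t % N) = F f t := by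
  conv_rhs => rw [← Nat.mod_add_div t N]
  rw [show t % N + N * (t / N) = t % N + (t / N) * N by ring, F_add_mul]

lemma SF_succ (f : Fin N → ℤ) (m : ℕ) : SF f (m + 1) = SF f m + F f m :=
  Finset.sum_range_succ _ _

lemma SF_add_right (f : Fin N → ℤ) (m : ℕ) : SF f (m + N) = SF f m + SF f N := by
  induction m with
  | zero => simp [SF]
  | succ m ih =>
      have : m + 1 + N = (m + N) + 1 := by ring
      rw [this, SF_succ, ih, F_add, SF_succ]; ring

lemma F_rot (s : ℕ) (f : Fin N → ℤ) (t : ℕ) : F (rot s f) t = F f (t + s) := by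
  rcases Nat.eq_zero_or_pos N with h | h
  · subst h; simp [F]
  · have hN : N ≠ 0 := h.ne'
    have : F (rot s f) t = F f (t % N + s) := by
      simp [F, hN, rot]
    rw [this]
    conv_rhs => rw [← Nat.mod_add_div t N]
    rw [show t % N + N * (t / N) + s = (t % N + s) + (t / N) * N by ring, F_add_mul]

lemma SF_rot (s : ℕ) (f : Fin N → ℤ) (m : ℕ) : SF (rot s f) m = SF f (s + m) - SF f s := by
  induction m with
  | zero => simp [SF]
  | succ m ih =>
      rw [SF_succ, ih, F_rot, show s + (m+1) = (s + m) + 1 by ring, SF_succ,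
        show m + s = s + m by ring]
      ring

lemma rot_rot (a b : ℕ) (f : Fin N → ℤ) : rot a (rot b f) = rot (a + b) f := by
  funext t
  show F (rot b f) (t.val + a) = F f (t.val + (a + b))
  rw [F_rot, Nat.add_assoc]

lemma rot_N (f : Fin N → ℤ) : rot N f = f := by
  funext t
  show F f (t.val + N) = f t
  rw [F_add, F_apply_fin]

lemma F_eq_of_lt {t : ℕ} (h : t < N) (f : Fin N → ℤ) : F f t = f ⟨t, h⟩ := by
  have hN : N ≠ 0 := by omega
  simp [F, hN, Nat.mod_eq_of_lt h]

lemma pathSum_succ {m : ℕ} (h : m < N) (f : Fin N → ℤ) :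
    pathSum f (m + 1) = pathSum f m + f ⟨m, h⟩ := by
  unfold pathSum
  have he : Finset.univ.filter (fun t : Fin N => (t : ℕ) < m + 1)
      = insert ⟨m, h⟩ (Finset.univ.filter (fun t : Fin N => (t : ℕ) < m)) := by
    ext t; simp [Fin.ext_iff]; omega
  rw [he, Finset.sum_insert (by simp)]
  ring

lemma pathSum_eq_SF (f : Fin N → ℤ) {m : ℕ} (hm : m ≤ N) : pathSum f m = SF f m := by
  induction m with
  | zero => simp [pathSum, SF]
  | succ m ih =>
      have h : m < N := hm
      rw [pathSum_succ h, SF_succ, ih (le_of_lt h), F_eq_of_lt h]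

lemma rot_val (hN : N ≠ 0) (s : ℕ) (f : Fin N → ℤ) (t : Fin N) :
    rot s f t = f ⟨(t.val + s) % N, Nat.mod_lt _ (Nat.pos_of_ne_zero hN)⟩ := by
  simp [rot, F, hN]

open Fin.NatCast in
lemma card_ones_rot (hN : N ≠ 0) (s : ℕ) (f : Fin N → ℤ) :
    (Finset.univ.filter (fun t : Fin N => rot s f t = 1)).card
      = (Finset.univ.filter (fun t : Fin N => f t = 1)).card := by
  haveI : NeZero N := ⟨hN⟩
  set e : Fin N ≃ Fin N := Equiv.addRight (s : Fin N) with he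
  have hrot : ∀ t : Fin N, rot s f t = f (e t) := by
    intro t
    have hv : (e t).val = (t.val + s) % N := by
      have : e t = t + (s : Fin N) := rfl
      rw [this, Fin.add_def]
      simp only [Fin.val_natCast]
      conv_rhs => rw [Nat.add_mod, Nat.mod_eq_of_lt t.isLt]
    show F f (t.val + s) = f (e t)
    rw [← F_apply_fin f (e t), hv, F_mod]
  have hset : Finset.univ.filter (fun t : Fin N => rot s f t = 1)
      = (Finset.univ.filter (fun t : Fin N => f t = 1)).map e.symm.toEmbedding := by
    ext t
    simp [Finset.mem_map_equiv, hrot]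
  rw [hset, Finset.card_map]

lemma even_SF_sub (hf1 : ∀ t, f t = 1 ∨ f t = -1) (hN : N ≠ 0) (m : ℕ) :
    Even (SF f m - (m : ℤ)) := by
  induction m with
  | zero => simp [SF]
  | succ m ih =>
      have hFm : F f m = 1 ∨ F f m = -1 := by
        have h : m % N < N := Nat.mod_lt _ (Nat.pos_of_ne_zero hN)
        have := hf1 ⟨m % N, h⟩
        simpa [F, hN] using this
      have : SF f (m + 1) - ((m : ℤ) + 1) = (SF f m - m) + (F f m - 1) := by
        rw [SF_succ]; ring
      rw [show ((m + 1 : ℕ) : ℤ) = (m : ℤ) + 1 by push_cast; ring, this]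
      refine ih.add ?_
      rcases hFm with h | h <;> rw [h] <;> decide

def TT (n k : ℕ) : ℤ := 2 - ((k : ℤ) - 2) * (n : ℤ)

def Vv (n k : ℕ) (f : Fin (k * n) → ℤ) (l : ℕ) : ℤ :=
  ((k * n : ℕ) : ℤ) * SF f (l * k) - ((l * k : ℕ) : ℤ) * TT n k

variable {n k : ℕ}

lemma hNne (hn : 1 ≤ n) (hk : 2 ≤ k) : k * n ≠ 0 := by positivity

lemma SF_total (hn : 1 ≤ n) (hk : 2 ≤ k) {f : Fin (k * n) → ℤ} (hf : IsPathP n k f) :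
    SF f (k * n) = TT n k := by
  classical
  have h1 : SF f (k * n) = ∑ t : Fin (k * n), f t := by
    rw [SF, ← Fin.sum_univ_eq_sum_range (fun t => F f t) (k * n)]
    exact Finset.sum_congr rfl (fun t _ => F_apply_fin f t)
  have hle : n + 1 ≤ k * n := by nlinarith
  have hcard := hf.2
  have hcard2 : (Finset.univ.filter (fun t : Fin (k * n) => ¬ f t = 1)).card
      = k * n - (n + 1) := by
    have h := Finset.card_filter_add_card_filter_not
      (s := (Finset.univ : Finset (Fin (k * n)))) (p := fun t => f t = 1)
    rw [Finset.card_univ, Fintype.card_fin] at h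
    omega
  have hsplit := Finset.sum_filter_add_sum_filter_not Finset.univ
    (fun t : Fin (k * n) => f t = 1) f
  have e1 : ∑ t ∈ Finset.univ.filter (fun t : Fin (k * n) => f t = 1), f t
      = ((n + 1 : ℕ) : ℤ) := by
    rw [Finset.sum_congr rfl (fun t ht => (Finset.mem_filter.mp ht).2),
      Finset.sum_const, hcard]
    simp
  have e2 : ∑ t ∈ Finset.univ.filter (fun t : Fin (k * n) => ¬ f t = 1), f t
      = -(((k * n - (n + 1) : ℕ)) : ℤ) := by
    have : ∀ t ∈ Finset.univ.filter (fun t : Fin (k * n) => ¬ f t = 1), f t = -1 := by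
      intro t ht
      rcases hf.1 t with h | h
      · exact absurd h (Finset.mem_filter.mp ht).2
      · exact h
    rw [Finset.sum_congr rfl this, Finset.sum_const, hcard2]
    simp
  rw [h1, ← hsplit, e1, e2, TT]
  push_cast [hle]
  ring

lemma rot_isPath (hn : 1 ≤ n) (hk : 2 ≤ k) (s : ℕ) {f : Fin (k * n) → ℤ}
    (hf : IsPathP n k f) : IsPathP n k (rot s f) := by
  have hN : k * n ≠ 0 := hNne hn hk
  constructor
  · intro t
    rw [rot_val hN]
    exact hf.1 _
  · rw [card_ones_rot hN]
    exact hf.2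

lemma Vv_add_n (hn : 1 ≤ n) (hk : 2 ≤ k) {f : Fin (k * n) → ℤ} (hf : IsPathP n k f)
    (l : ℕ) : Vv n k f (l + n) = Vv n k f l := by
  have h1 : (l + n) * k = l * k + k * n := by ring
  have h2 : SF f ((l + n) * k) = SF f (l * k) + TT n k := by
    rw [h1, SF_add_right, SF_total hn hk hf]
  rw [Vv, Vv, h2, h1]
  push_cast
  ring

lemma Vv_mod (hn : 1 ≤ n) (hk : 2 ≤ k) {f : Fin (k * n) → ℤ} (hf : IsPathP n k f)
    (l : ℕ) : Vv n k f l = Vv n k f (l % n) := by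
  have key : ∀ q m, Vv n k f (m + q * n) = Vv n k f m := by
    intro q
    induction q with
    | zero => simp
    | succ q ih =>
        intro m
        rw [Nat.succ_mul, ← Nat.add_assoc]
        rw [show m + q * n + n = (m + q * n) + n from rfl, Vv_add_n hn hk hf, ih]
  conv_lhs => rw [← Nat.mod_add_div l n,
    show l % n + n * (l / n) = l % n + (l / n) * n by ring, key]

lemma Vv_inj_aux (hn : 1 ≤ n) (hk : 2 ≤ k) {f : Fin (k * n) → ℤ} (hf : IsPathP n k f)
    {a b : ℕ} (hab : a < b) (hb : b < n) (hV : Vv n k f a = Vv n k f b) : False := by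
  have hN : k * n ≠ 0 := hNne hn hk
  set K : ℤ := (k : ℤ) with hK
  set Nn : ℤ := (n : ℤ) with hNn
  set A : ℤ := (a : ℤ) with hA
  set B : ℤ := (b : ℤ) with hB
  set Δ : ℤ := SF f (b * k) - SF f (a * k) with hΔ
  have hTT : TT n k = 2 + 2 * Nn - K * Nn := by rw [TT]; ring
  have h1 : K * Nn * Δ = (B - A) * K * TT n k := by
    rw [Vv, Vv] at hV
    push_cast at hV ⊢
    rw [hΔ]
    push_cast
    linarith [hV]
  have hK0 : K ≠ 0 := by positivity
  have h2 : Nn * Δ = (B - A) * TT n k := by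
    have : K * (Nn * Δ) = K * ((B - A) * TT n k) := by linarith [h1]
    exact mul_left_cancel₀ hK0 this
  set q : ℤ := Δ - (B - A) * (2 - K) with hq
  have h3 : Nn * q = 2 * (B - A) := by rw [hq, hTT] at *; linarith [h2]
  have hD1 : (1 : ℤ) ≤ B - A := by
    have : (a : ℤ) < (b : ℤ) := by exact_mod_cast hab
    omega
  have hD2 : B - A < Nn := by
    have : (b : ℤ) < (n : ℤ) := by exact_mod_cast hb
    omega
  have hn0 : 0 < n := hn
  have hNn0 : (0 : ℤ) < Nn := by rw [hNn]; exact_mod_cast hn0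
  have hq1 : q = 1 := by nlinarith [h3, hD1, hD2, hNn0]
  -- so Δ = (B - A) * (2 - K) + 1
  have hΔval : Δ = (B - A) * (2 - K) + 1 := by omega
  -- parity
  have e1 := even_SF_sub hf.1 hN (b * k)
  have e2 := even_SF_sub hf.1 hN (a * k)
  have e3 : Even (Δ - (B - A) * K) := by
    have := e1.sub e2
    have heq : SF f (b * k) - ((b * k : ℕ) : ℤ) - (SF f (a * k) - ((a * k : ℕ) : ℤ))
        = Δ - (B - A) * K := by
      rw [hΔ]; push_cast; ring
    rwa [heq] at this
  have : Δ - (B - A) * K = 2 * ((B - A) * (1 - K)) + 1 := by rw [hΔval]; ring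
  rw [this] at e3
  rcases e3 with ⟨c, hc⟩
  omega

lemma Vv_inj (hn : 1 ≤ n) (hk : 2 ≤ k) {f : Fin (k * n) → ℤ} (hf : IsPathP n k f)
    {a b : ℕ} (ha : a < n) (hb : b < n) (hV : Vv n k f a = Vv n k f b) : a = b := by
  rcases lt_trichotomy a b with h | h | h
  · exact absurd (Vv_inj_aux hn hk hf h hb hV) (by simp)
  · exact h
  · exact absurd (Vv_inj_aux hn hk hf h ha hV.symm) (by simp)

lemma statX_eq_card (hn : 1 ≤ n) (hk : 2 ≤ k) (g : Fin (k * n) → ℤ) :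
    statX n k g = ((Finset.range n).filter (fun c => 0 < c ∧
      ((k * n : ℕ) : ℤ) * pathSum g (c * k) > ((c * k : ℕ) : ℤ) * TT n k)).card := by
  have hk0 : k ≠ 0 := by omega
  rw [statX]
  have himg : (Finset.range (k * n)).filter (fun m => 0 < m ∧ k ∣ m ∧
        ((k * n : ℕ) : ℤ) * pathSum g m > (m : ℤ) * (2 - ((k : ℤ) - 2) * (n : ℤ)))
      = ((Finset.range n).filter (fun c => 0 < c ∧
        ((k * n : ℕ) : ℤ) * pathSum g (c * k) > ((c * k : ℕ) : ℤ) * TT n k)).image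
          (fun c => c * k) := by
    ext m
    simp only [Finset.mem_image, Finset.mem_filter, Finset.mem_range]
    constructor
    · rintro ⟨hm, hm0, ⟨c, rfl⟩, hP⟩
      refine ⟨c, ⟨?_, ?_, ?_⟩, by ring⟩
      · by_contra h
        push_neg at h
        have : k * n ≤ k * c := Nat.mul_le_mul_left k h
        omega
      · rcases Nat.eq_zero_or_pos c with rfl | h
        · simp at hm0
        · exact h
      · rw [Nat.mul_comm c k, TT]
        exact hP
    · rintro ⟨c, ⟨hcn, hc0, hP⟩, rfl⟩
      refine ⟨?_, Nat.mul_pos hc0 (by omega), ⟨c, by ring⟩, ?_⟩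
      · calc c * k < n * k := (Nat.mul_lt_mul_right (by omega : 0 < k)).mpr hcn
          _ = k * n := by ring
      · rw [TT] at hP
        exact hP
  rw [himg, Finset.card_image_of_injective _ (fun a b h => Nat.eq_of_mul_eq_mul_right (by omega) h)]

lemma statX_rot (hn : 1 ≤ n) (hk : 2 ≤ k) {f : Fin (k * n) → ℤ} (hf : IsPathP n k f)
    {j : ℕ} (hj : j < n) :
    statX n k (rot (j * k) f)
      = ((Finset.range n).filter (fun l => Vv n k f j < Vv n k f l)).card := by
  have hn0 : 0 < n := hn
  rw [statX_eq_card hn hk]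
  -- rewrite the predicate
  have hpred : ∀ c < n,
      (((k * n : ℕ) : ℤ) * pathSum (rot (j * k) f) (c * k) > ((c * k : ℕ) : ℤ) * TT n k)
        ↔ Vv n k f j < Vv n k f ((j + c) % n) := by
    intro c hc
    have hck : c * k ≤ k * n := by
      calc c * k ≤ n * k := Nat.mul_le_mul_right k (le_of_lt hc)
        _ = k * n := by ring
    have hps : pathSum (rot (j * k) f) (c * k) = SF f ((j + c) * k) - SF f (j * k) := by
      rw [pathSum_eq_SF _ hck, SF_rot, show j * k + c * k = (j + c) * k by ring]
    have E : Vv n k f (j + c) - Vv n k f j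
        = ((k * n : ℕ) : ℤ) * pathSum (rot (j * k) f) (c * k) - ((c * k : ℕ) : ℤ) * TT n k := by
      rw [hps, Vv, Vv]
      push_cast
      ring
    rw [← Vv_mod hn hk hf (j + c)]
    constructor
    · intro h
      have : 0 < Vv n k f (j + c) - Vv n k f j := by rw [E]; linarith
      linarith
    · intro h
      have : 0 < Vv n k f (j + c) - Vv n k f j := by linarith
      rw [E] at this
      linarith
  have hfe : (Finset.range n).filter (fun c => 0 < c ∧
        ((k * n : ℕ) : ℤ) * pathSum (rot (j * k) f) (c * k) > ((c * k : ℕ) : ℤ) * TT n k)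
      = (Finset.range n).filter (fun c => 0 < c ∧ Vv n k f j < Vv n k f ((j + c) % n)) := by
    apply Finset.filter_congr
    intro c hc
    rw [Finset.mem_range] at hc
    rw [hpred c hc]
  rw [hfe]
  refine Finset.card_nbij' (fun c => (j + c) % n) (fun l => (l + (n - j)) % n)
    ?_ ?_ ?_ ?_
  · intro c hc
    rw [Finset.mem_coe, Finset.mem_filter, Finset.mem_range] at hc ⊢
    exact ⟨Nat.mod_lt _ hn0, hc.2.2⟩
  · intro l hl
    rw [Finset.mem_coe, Finset.mem_filter, Finset.mem_range] at hl ⊢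
    obtain ⟨hln, hVl⟩ := hl
    have harith : (j + (l + (n - j)) % n) % n = l := by
      rw [Nat.add_mod_mod, show j + (l + (n - j)) = l + n by omega,
        Nat.add_mod_right, Nat.mod_eq_of_lt hln]
    refine ⟨Nat.mod_lt _ hn0, ?_, by rw [harith]; exact hVl⟩
    -- 0 < (l + (n - j)) % n
    rcases Nat.eq_zero_or_pos ((l + (n - j)) % n) with h0 | h0
    · exfalso
      rw [h0, Nat.add_zero, Nat.mod_eq_of_lt hj] at harith
      rw [harith] at hVl
      exact lt_irrefl _ hVl
    · exact h0
  · intro c hc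
    rw [Finset.mem_coe, Finset.mem_filter, Finset.mem_range] at hc
    show ((j + c) % n + (n - j)) % n = c
    rw [Nat.mod_add_mod, show j + c + (n - j) = c + n by omega,
      Nat.add_mod_right, Nat.mod_eq_of_lt hc.1]
  · intro l hl
    rw [Finset.mem_coe, Finset.mem_filter, Finset.mem_range] at hl
    show (j + (l + (n - j)) % n) % n = l
    rw [Nat.add_mod_mod, show j + (l + (n - j)) = l + n by omega,
      Nat.add_mod_right, Nat.mod_eq_of_lt hl.1]

lemma exists_unique_rot (hn : 1 ≤ n) (hk : 2 ≤ k) {f : Fin (k * n) → ℤ}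
    (hf : IsPathP n k f) {i : ℕ} (hi : i < n) :
    ∃! j, j < n ∧ statX n k (rot (j * k) f) = i := by
  classical
  set R : ℕ → ℕ :=
    fun j => ((Finset.range n).filter (fun l => Vv n k f j < Vv n k f l)).card with hR
  have hstat : ∀ j, j < n → statX n k (rot (j * k) f) = R j :=
    fun j hj => statX_rot hn hk hf hj
  have hmono : ∀ a b, a < n → b < n → Vv n k f a < Vv n k f b → R b < R a := by
    intro a b ha hb hV
    have hsub : (Finset.range n).filter (fun l => Vv n k f b < Vv n k f l)
        ⊆ (Finset.range n).filter (fun l => Vv n k f a < Vv n k f l) := by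
      intro l hl
      rw [Finset.mem_filter] at hl ⊢
      exact ⟨hl.1, lt_trans hV hl.2⟩
    have hbmem : b ∈ (Finset.range n).filter (fun l => Vv n k f a < Vv n k f l) :=
      Finset.mem_filter.mpr ⟨Finset.mem_range.mpr hb, hV⟩
    have hbnot : b ∉ (Finset.range n).filter (fun l => Vv n k f b < Vv n k f l) := by
      simp
    exact Finset.card_lt_card ((Finset.ssubset_iff_of_subset hsub).mpr ⟨b, hbmem, hbnot⟩)
  have hinj : ∀ a b, a < n → b < n → R a = R b → a = b := by
    intro a b ha hb hRab
    rcases lt_trichotomy (Vv n k f a) (Vv n k f b) with h | h | h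
    · have := hmono a b ha hb h; omega
    · exact Vv_inj hn hk hf ha hb h
    · have := hmono b a hb ha h; omega
  have hlt : ∀ j, j < n → R j < n := by
    intro j hj
    have hsub : (Finset.range n).filter (fun l => Vv n k f j < Vv n k f l)
        ⊆ (Finset.range n).erase j := by
      intro l hl
      rw [Finset.mem_filter] at hl
      rw [Finset.mem_erase]
      refine ⟨?_, hl.1⟩
      rintro rfl
      exact lt_irrefl _ hl.2
    have hcard : R j ≤ ((Finset.range n).erase j).card := Finset.card_le_card hsub
    rw [Finset.card_erase_of_mem (Finset.mem_range.mpr hj), Finset.card_range] at hcard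
    omega
  have himg : (Finset.range n).image R = Finset.range n := by
    apply Finset.eq_of_subset_of_card_le
    · intro x hx
      obtain ⟨j, hj, rfl⟩ := Finset.mem_image.mp hx
      exact Finset.mem_range.mpr (hlt j (Finset.mem_range.mp hj))
    · rw [Finset.card_image_of_injOn
        (fun a ha b hb h => hinj a b (Finset.mem_range.mp ha) (Finset.mem_range.mp hb) h),
        Finset.card_range]
  obtain ⟨j, hjr, hji⟩ := Finset.mem_image.mp (himg ▸ Finset.mem_range.mpr hi)
  have hjn := Finset.mem_range.mp hjr
  refine ⟨j, ⟨hjn, (hstat j hjn).trans hji⟩, ?_⟩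
  rintro j' ⟨hj', hs'⟩
  exact hinj j' j hj' hjn (by rw [← hstat j' hj', hs', hji])

lemma rot_zero (f : Fin N → ℤ) : rot 0 f = f := by
  funext t
  show F f (t.val + 0) = f t
  rw [Nat.add_zero, F_apply_fin]

lemma rot_add_N (s : ℕ) (f : Fin N → ℤ) : rot (s + N) f = rot s f := by
  funext t
  show F f (t.val + (s + N)) = F f (t.val + s)
  rw [← Nat.add_assoc, F_add]

lemma rot_add_mul_N (s q : ℕ) (f : Fin N → ℤ) : rot (s + q * N) f = rot s f := by
  induction q with
  | zero => simp
  | succ q ih => rw [Nat.succ_mul, ← Nat.add_assoc, rot_add_N, ih]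

lemma rot_k_mod (hn : 1 ≤ n) (f : Fin (k * n) → ℤ) (a : ℕ) :
    rot (a * k) f = rot ((a % n) * k) f := by
  conv_lhs => rw [← Nat.mod_add_div a n]
  rw [show (a % n + n * (a / n)) * k = (a % n) * k + (a / n) * (k * n) by ring,
    rot_add_mul_N]

lemma card_paths (hn : 1 ≤ n) (hk : 2 ≤ k) :
    Nat.card {f : Fin (k * n) → ℤ // IsPathP n k f} = Nat.choose (k * n) (n + 1) := by
  classical
  have e : {f : Fin (k * n) → ℤ // IsPathP n k f}
      ≃ {s : Finset (Fin (k * n)) // s.card = n + 1} :=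
    { toFun := fun f => ⟨Finset.univ.filter (fun t => f.1 t = 1), f.2.2⟩
      invFun := fun s => ⟨fun t => if t ∈ s.1 then 1 else -1,
        ⟨fun t => by dsimp only; split <;> simp, by
          rw [show (Finset.univ.filter fun t : Fin (k * n) =>
              (if t ∈ s.1 then (1 : ℤ) else -1) = 1) = s.1 by
            ext t
            simp only [Finset.mem_filter, Finset.mem_univ, true_and]
            split <;> simp_all]
          exact s.2⟩⟩
      left_inv := by
        rintro ⟨f, hf⟩
        apply Subtype.ext
        funext t
        simp only
        rcases hf.1 t with h | h <;> rw [h] <;> simp [h]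
      right_inv := by
        rintro ⟨s, hs⟩
        apply Subtype.ext
        simp only
        ext t
        simp only [Finset.mem_filter, Finset.mem_univ, true_and]
        split <;> simp_all }
  rw [Nat.card_congr e, Nat.card_eq_fintype_card, Fintype.card_finset_len,
    Fintype.card_fin]

lemma card_fiber (hn : 1 ≤ n) (hk : 2 ≤ k) {i : ℕ} (hi : i < n) :
    Nat.card {f : Fin (k * n) → ℤ // IsPathP n k f}
      = n * Nat.card {f : Fin (k * n) → ℤ // IsPathP n k f ∧ statX n k f = i} := by
  classical
  have hn0 : 0 < n := hn
  set S := {f : Fin (k * n) → ℤ // IsPathP n k f ∧ statX n k f = i} with hS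
  set g : Fin n × S → {f : Fin (k * n) → ℤ // IsPathP n k f} :=
    fun p => ⟨rot (p.1.1 * k) p.2.1, rot_isPath hn hk _ p.2.2.1⟩ with hg
  have hbij : Function.Bijective g := by
    constructor
    · rintro ⟨⟨j, hjn⟩, f⟩ ⟨⟨j', hj'n⟩, f'⟩ h
      have h1 : rot (j * k) f.1 = rot (j' * k) f'.1 := congrArg Subtype.val h
      have hnj' : (n - j') + j' = n := by omega
      have hfix : rot ((n - j') * k) (rot (j' * k) f'.1) = f'.1 := by
        rw [rot_rot, show (n - j') * k + j' * k = k * n by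
          rw [← Nat.add_mul, hnj', Nat.mul_comm], rot_N]
      have hf' : f'.1 = rot (((n - j') + j) * k) f.1 := by
        rw [← hfix, ← h1, rot_rot, ← Nat.add_mul]
      -- statX of rot (d*k) f.1 where d = ((n-j')+j) % n
      set d := ((n - j') + j) % n with hd
      have hdn : d < n := Nat.mod_lt _ hn0
      have hsd : statX n k (rot (d * k) f.1) = i := by
        rw [← rot_k_mod hn, ← hf']
        exact f'.2.2
      have hs0 : statX n k (rot (0 * k) f.1) = i := by
        rw [Nat.zero_mul, rot_zero]
        exact f.2.2
      have huniq := exists_unique_rot hn hk f.2.1 hi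
      have hd0 : d = 0 := by
        rcases huniq with ⟨j0, _, hu⟩
        have e1 := hu d ⟨hdn, hsd⟩
        have e2 := hu 0 ⟨hn0, hs0⟩
        omega
      -- conclude j = j'
      have hdvd := Nat.dvd_of_mod_eq_zero (hd ▸ hd0)
      obtain ⟨c, hc⟩ := hdvd
      have hx1 : 0 < (n - j') + j := by omega
      have hx2 : (n - j') + j < 2 * n := by omega
      have hc1 : c = 1 := by
        rcases Nat.lt_or_ge c 2 with h2 | h2
        · interval_cases c
          · omega
          · rfl
        · have := Nat.mul_le_mul_left n h2
          omega
      rw [hc1, Nat.mul_one] at hc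
      have hjj' : j = j' := by omega
      subst hjj'
      have hff : f.1 = f'.1 := by
        have h2 := congrArg (rot ((n - j) * k)) h1
        rw [rot_rot, rot_rot, show (n - j) * k + j * k = k * n by
          rw [← Nat.add_mul, show (n - j) + j = n by omega, Nat.mul_comm],
          rot_N, rot_N] at h2
        exact h2
      exact Prod.ext rfl (Subtype.ext hff)
    · rintro ⟨F, hF⟩
      obtain ⟨j, ⟨hjn, hjX⟩, _⟩ := exists_unique_rot hn hk hF hi
      refine ⟨(⟨(n - j) % n, Nat.mod_lt _ hn0⟩,
        ⟨rot (j * k) F, rot_isPath hn hk _ hF, hjX⟩), ?_⟩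
      apply Subtype.ext
      show rot (((n - j) % n) * k) (rot (j * k) F) = F
      rw [← rot_k_mod hn, rot_rot, show (n - j) * k + j * k = k * n by
        rw [← Nat.add_mul, show (n - j) + j = n by omega, Nat.mul_comm], rot_N]
  rw [← Nat.card_eq_of_bijective g hbij, Nat.card_prod, Nat.card_eq_fintype_card,
    Fintype.card_fin]

end Stmt3

/-- for every `i` with `0 ≤ i ≤ n−1`, the number of paths `f ∈ 𝒫_{n,k}`
with `X(f) = i`, multiplied by `n`, equals `C(kn, n+1)`; i.e. `X` is uniformly
distributed over `{0, 1, …, n−1}`. -/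
theorem stmt_3 (n k : ℕ) (hn : 1 ≤ n) (hk : 2 ≤ k) (i : ℕ) (hi : i ≤ n - 1) :
    n * Nat.card {f : Fin (k * n) → ℤ // IsPathP n k f ∧ statX n k f = i} =
      Nat.choose (k * n) (n + 1) := by
  have hi' : i < n := by omega
  rw [← Stmt3.card_fiber hn hk hi', Stmt3.card_paths hn hk]
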